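/- arXiv:1701.02835 — 5 statements merged into one kernel-verified Lean document; each statement's English description precedes it below -/
import Mathlib

section
/- Let V be a subspace of C^n, x a nonzero vector, v a unit vector orthogonal to V, and V' = V + span{v}. Let x_⊥ = (I - P_V)x and assume x_⊥ ≠ 0 and sin∠(v, x_⊥) ≠ 0 (where the angle between two nonzero vectors u, w satisfies cos∠(u,w) = |u* w|/(||u|| ||w||)). Then sin∠(V', x) = sin∠(V, x) · sin∠(v, x_⊥). -/
noncomputable def sinV {n : ℕ} (V : Submodule ℂ (EuclideanSpace ℂ (Fin n)))
    (x : EuclideanSpace ℂ (Fin n)) : ℝ :=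
  ‖x - (Submodule.orthogonalProjection V x : EuclideanSpace ℂ (Fin n))‖ / ‖x‖

/-- Sine of the angle between two nonzero vectors, via
`cos∠(u,w) = |⟪u,w⟫| / (‖u‖ ‖w‖)` and `sin = sqrt (1 - cos²)`. -/
noncomputable def sinA {n : ℕ} (u w : EuclideanSpace ℂ (Fin n)) : ℝ :=
  Real.sqrt (1 - ‖(inner ℂ u w : ℂ)‖ ^ 2 / (‖u‖ ^ 2 * ‖w‖ ^ 2))

theorem stmt1 {n : ℕ} (V : Submodule ℂ (EuclideanSpace ℂ (Fin n)))
    (x v : EuclideanSpace ℂ (Fin n)) (hx : x ≠ 0) (hv : ‖v‖ = 1)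
    (hvV : v ∈ Vᗮ)
    (hperp : x - (Submodule.orthogonalProjection V x : EuclideanSpace ℂ (Fin n)) ≠ 0)
    (hsin : sinA v (x - (Submodule.orthogonalProjection V x : EuclideanSpace ℂ (Fin n))) ≠ 0) :
    sinV (V ⊔ Submodule.span ℂ {v}) x
      = sinV V x * sinA v (x - (Submodule.orthogonalProjection V x : EuclideanSpace ℂ (Fin n))) := by
  set w : EuclideanSpace ℂ (Fin n) := x - (Submodule.orthogonalProjection V x : EuclideanSpace ℂ (Fin n))
    with hw
  set c : ℂ := inner ℂ v w with hc
  have hwV : w ∈ Vᗮ := Submodule.sub_starProjection_mem_orthogonal x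
  have hproj : (Submodule.orthogonalProjection (V ⊔ Submodule.span ℂ {v}) x : EuclideanSpace ℂ (Fin n))
      = (Submodule.orthogonalProjection V x : EuclideanSpace ℂ (Fin n)) + c • v := by
    apply Submodule.eq_starProjection_of_mem_orthogonal
    · exact Submodule.add_mem _
        (Submodule.mem_sup_left (Submodule.orthogonalProjection V x).2)
        (Submodule.mem_sup_right (Submodule.smul_mem _ c (Submodule.mem_span_singleton_self v)))
    · rw [← Submodule.inf_orthogonal, Submodule.mem_inf]
      have heq : x - ((Submodule.orthogonalProjection V x : EuclideanSpace ℂ (Fin n)) + c • v)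
          = w - c • v := by rw [hw]; abel
      constructor
      · rw [heq]
        exact Submodule.sub_mem _ hwV (Submodule.smul_mem _ _ hvV)
      · rw [Submodule.mem_orthogonal_singleton_iff_inner_right, heq,
          inner_sub_right, inner_smul_right, ← hc]
        have : (inner ℂ v v : ℂ) = 1 := by
          rw [inner_self_eq_norm_sq_to_K, hv]; norm_num
        rw [this]; ring
  have hxw : x - (Submodule.orthogonalProjection (V ⊔ Submodule.span ℂ {v}) x : EuclideanSpace ℂ (Fin n))
      = w - c • v := by rw [hproj, hw]; abel
  have hnormsq : ‖w - c • v‖ ^ 2 = ‖w‖ ^ 2 - ‖c‖ ^ 2 := by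
    have h := @norm_sub_sq ℂ _ _ _ _ w (c • v)
    have h2 : (inner ℂ w (c • v) : ℂ) = c * starRingEnd ℂ c := by
      rw [inner_smul_right, ← inner_conj_symm, ← hc]
    rw [h2, Complex.mul_conj, norm_smul, hv] at h
    simp only [Complex.normSq_eq_norm_sq, RCLike.re_to_complex,
      Complex.ofReal_re, mul_one] at h
    rw [h]; ring
  have hwpos : (0:ℝ) < ‖w‖ := norm_pos_iff.mpr hperp
  have hxpos : (0:ℝ) < ‖x‖ := norm_pos_iff.mpr hx
  have hsA : sinA v w = Real.sqrt (1 - ‖c‖ ^ 2 / ‖w‖ ^ 2) := by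
    rw [sinA, hv, ← hc]; norm_num
  have hLHS : ‖w - c • v‖ = Real.sqrt (‖w‖ ^ 2 - ‖c‖ ^ 2) := by
    rw [← hnormsq, Real.sqrt_sq (norm_nonneg _)]
  rw [sinV, sinV, hxw, ← hw, hLHS, hsA]
  rw [div_mul_eq_mul_div, div_eq_div_iff (by positivity) (by positivity)]
  congr 1
  have h3 : ‖w‖ * Real.sqrt (1 - ‖c‖ ^ 2 / ‖w‖ ^ 2)
      = Real.sqrt (‖w‖ ^ 2 * (1 - ‖c‖ ^ 2 / ‖w‖ ^ 2)) := by
    rw [Real.sqrt_mul (sq_nonneg _), Real.sqrt_sq hwpos.le]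
  rw [h3]
  congr 1
  field_simp
end

section
/- Let V_1 ⊆ V_2 ⊆ ... ⊆ V_m be a nested sequence of subspaces of C^n where V_{i+1} = V_i + span{v_{i+1}} with each v_{i+1} a unit vector orthogonal to V_i, and let x be a nonzero vector with x_{i,⊥} = (I - P_{V_i})x ≠ 0 for all i < m. Then sin∠(V_m, x) = ∏_{i=1}^{m-1} sin∠(v_{i+1}, x_{i,⊥}) · sin∠(V_1, x). -/
lemma step_key {n : ℕ} (V : Submodule ℂ (EuclideanSpace ℂ (Fin n)))
    (v x : EuclideanSpace ℂ (Fin n)) (hv : ‖v‖ = 1) (ho : v ∈ Vᗮ)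
    (hxp : x - (Submodule.orthogonalProjection V x : EuclideanSpace ℂ (Fin n)) ≠ 0) :
    sinV (V ⊔ Submodule.span ℂ {v}) x
      = sinA v (x - (Submodule.orthogonalProjection V x : EuclideanSpace ℂ (Fin n))) * sinV V x := by
  set p : EuclideanSpace ℂ (Fin n) := (Submodule.orthogonalProjection V x : EuclideanSpace ℂ (Fin n))
    with hp
  set xp : EuclideanSpace ℂ (Fin n) := x - p with hxpdef
  have hpmem : p ∈ V := SetLike.coe_mem _
  have hvp : (inner ℂ v p : ℂ) = 0 := (Submodule.mem_orthogonal' V v).1 ho p hpmem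
  set t : ℂ := inner ℂ v xp with ht
  have hvv : (inner ℂ v v : ℂ) = 1 := by
    rw [inner_self_eq_norm_sq_to_K, hv]; norm_num
  have hvxp : (inner ℂ v (xp - t • v) : ℂ) = 0 := by
    rw [inner_sub_right, inner_smul_right, hvv, mul_one, sub_self]
  set y : EuclideanSpace ℂ (Fin n) := p + t • v with hy
  have hproj : (Submodule.orthogonalProjection (V ⊔ Submodule.span ℂ {v}) x :
      EuclideanSpace ℂ (Fin n)) = y := by
    refine Submodule.eq_starProjection_of_mem_orthogonal ?_ ?_
    · exact Submodule.add_mem_sup hpmem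
        (Submodule.smul_mem _ _ (Submodule.mem_span_singleton_self v))
    · have hxy : x - y = xp - t • v := by rw [hy, hxpdef]; abel
      rw [hxy, ← Submodule.inf_orthogonal, Submodule.mem_inf]
      constructor
      · exact Submodule.sub_mem _ (Submodule.sub_starProjection_mem_orthogonal x)
          (Submodule.smul_mem _ _ ho)
      · rw [Submodule.mem_orthogonal]
        intro u hu
        obtain ⟨c, rfl⟩ := Submodule.mem_span_singleton.1 hu
        rw [inner_smul_left, hvxp, mul_zero]
  have hxy : x - y = xp - t • v := by rw [hy, hxpdef]; abel
  have hnorm_t : ‖t • v‖ = ‖t‖ := by rw [norm_smul, hv, mul_one]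
  have hpyth : ‖xp‖ ^ 2 = ‖xp - t • v‖ ^ 2 + ‖t‖ ^ 2 := by
    have := norm_add_sq_eq_norm_sq_add_norm_sq_of_inner_eq_zero (xp - t • v) (t • v)
      (by rw [inner_smul_right, ← inner_conj_symm, hvxp, map_zero, mul_zero])
    have h2 : xp - t • v + t • v = xp := by abel
    rw [h2, hnorm_t] at this
    rw [sq, sq, sq]; exact this
  have hxpne : ‖xp‖ ≠ 0 := norm_ne_zero_iff.2 hxp
  have hsinA : sinA v xp = ‖xp - t • v‖ / ‖xp‖ := by
    rw [sinA, hv, ← ht, one_pow, one_mul]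
    have h1 : 1 - ‖t‖ ^ 2 / ‖xp‖ ^ 2 = ‖xp - t • v‖ ^ 2 / ‖xp‖ ^ 2 := by
      field_simp
      linarith [hpyth]
    rw [h1, Real.sqrt_div (by positivity), Real.sqrt_sq (norm_nonneg _),
      Real.sqrt_sq (norm_nonneg _)]
  rw [sinV, sinV, hproj, hxy, hsinA]
  rw [div_mul_div_comm, ← hxpdef, mul_comm ‖xp‖ ‖x‖, mul_div_mul_right _ _ hxpne]

/-- Nested subspaces `V 0 ⊆ V 1 ⊆ ⋯ ⊆ V m` (standing for `V_1 ⊆ ⋯ ⊆ V_m`),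
each obtained by adjoining a unit vector orthogonal to the previous one. -/
theorem stmt2 {n : ℕ} (m : ℕ) (V : ℕ → Submodule ℂ (EuclideanSpace ℂ (Fin n)))
    (v : ℕ → EuclideanSpace ℂ (Fin n)) (x : EuclideanSpace ℂ (Fin n)) (hx : x ≠ 0)
    (hstep : ∀ i < m, V (i + 1) = V i ⊔ Submodule.span ℂ {v (i + 1)})
    (hunit : ∀ i < m, ‖v (i + 1)‖ = 1)
    (horth : ∀ i < m, v (i + 1) ∈ (V i)ᗮ)
    (hperp : ∀ i < m,
      x - (Submodule.orthogonalProjection (V i) x : EuclideanSpace ℂ (Fin n)) ≠ 0) :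
    sinV (V m) x
      = (∏ i ∈ Finset.range m,
          sinA (v (i + 1))
            (x - (Submodule.orthogonalProjection (V i) x : EuclideanSpace ℂ (Fin n)))) *
        sinV (V 0) x := by
  induction m with
  | zero => simp
  | succ m ih =>
    have hm : m < m + 1 := Nat.lt_succ_self m
    have h1 : sinV (V (m + 1)) x
        = sinA (v (m + 1))
            (x - (Submodule.orthogonalProjection (V m) x : EuclideanSpace ℂ (Fin n))) *
          sinV (V m) x := by
      rw [hstep m hm]
      exact step_key (V m) (v (m + 1)) x (hunit m hm) (horth m hm) (hperp m hm)
    rw [h1, ih (fun i hi => hstep i (hi.trans hm)) (fun i hi => hunit i (hi.trans hm))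
      (fun i hi => horth i (hi.trans hm)) (fun i hi => hperp i (hi.trans hm)),
      Finset.prod_range_succ]
    ring
end

section
/- Under the hypotheses of the previous statement, if additionally x_{1,⊥} = (I - P_V)x_1 ≠ 0 and v = (I - P_V)Q(σ)^{-1}r ≠ 0, then sin∠(v, x_{1,⊥}) ≤ |λ_1 - σ|/|λ_2 - σ| · ξ / ||x_{1,⊥}||, where ξ = (Σ_{i=2}^{2n} |y_i* r|)/|y_1* r|. In particular when x_{1,⊥} is a unit vector, sin∠(v, x_{1,⊥}) ≤ |λ_1 - σ|/|λ_2 - σ| · ξ. -/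
set_option maxHeartbeats 1000000


lemma normsq_re_im (z : ℂ) : ‖z‖ ^ 2 = z.re ^ 2 + z.im ^ 2 := by
  rw [Complex.sq_norm, Complex.normSq_apply]; ring

lemma sin_le_aux {n : ℕ} (v w : EuclideanSpace ℂ (Fin n)) (hw : w ≠ 0) (α : ℂ) :
    Real.sqrt (1 - ‖(inner ℂ v w : ℂ)‖ ^ 2 / (‖v‖ ^ 2 * ‖w‖ ^ 2)) ≤ ‖α • v - w‖ / ‖w‖ := by
  have hwpos : (0:ℝ) < ‖w‖ := norm_pos_iff.2 hw
  rw [show ‖α • v - w‖ / ‖w‖ = Real.sqrt ((‖α • v - w‖ / ‖w‖) ^ 2) from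
    (Real.sqrt_sq (by positivity)).symm]
  apply Real.sqrt_le_sqrt
  rw [div_pow]
  rcases eq_or_ne v 0 with h | h
  · simp [h, div_self (by positivity : ‖w‖ ^ (2:ℕ) ≠ (0:ℝ))]
  · have hvpos : (0:ℝ) < ‖v‖ := norm_pos_iff.2 h
    have hexp : ‖α • v - w‖ ^ 2 = ‖α‖ ^ 2 * ‖v‖ ^ 2
        - 2 * (α.re * (inner ℂ v w : ℂ).re + α.im * (inner ℂ v w : ℂ).im) + ‖w‖ ^ 2 := by
      rw [@norm_sub_sq ℂ]
      rw [inner_smul_left, norm_smul]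
      simp [Complex.mul_re, Complex.conj_re, Complex.conj_im, mul_pow]
    have hI := normsq_re_im (inner ℂ v w : ℂ)
    have hα := normsq_re_im α
    set p := (inner ℂ v w : ℂ).re
    set q := (inner ℂ v w : ℂ).im
    rw [hexp, hI, hα, one_sub_div (by positivity), div_le_div_iff₀ (by positivity) (by positivity)]
    nlinarith [mul_nonneg (sq_nonneg (α.re * ‖v‖ ^ 2 - p)) (sq_nonneg ‖w‖),
      mul_nonneg (sq_nonneg (α.im * ‖v‖ ^ 2 - q)) (sq_nonneg ‖w‖), sq_nonneg ‖v‖, sq_nonneg ‖w‖]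

lemma perp_norm_le {n : ℕ} (V : Submodule ℂ (EuclideanSpace ℂ (Fin n)))
    (a : EuclideanSpace ℂ (Fin n)) :
    ‖a - (V.orthogonalProjectionOnto a : EuclideanSpace ℂ (Fin n))‖ ≤ ‖a‖ := by
  have h1 : a - (V.orthogonalProjectionOnto a : EuclideanSpace ℂ (Fin n))
      = (Vᗮ.orthogonalProjectionOnto a : EuclideanSpace ℂ (Fin n)) := by
    exact (Submodule.starProjection_orthogonal_val (K := V) a).symm
  rw [h1]
  have h2 := Submodule.norm_sq_eq_add_norm_sq_projection a V
  simp only [Submodule.norm_coe] at h2 ⊢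
  nlinarith [norm_nonneg (Vᗮ.orthogonalProjectionOnto a), norm_nonneg a,
    norm_nonneg (V.orthogonalProjectionOnto a)]

/-- Under the hypotheses of Theorem 2, with `v = (I - P_V)u ≠ 0` and
`x_{1,⊥} = (I - P_V)x₁ ≠ 0`, the sine of the angle between the expansion direction
and `x_{1,⊥}` is bounded by `|λ₁-σ|/|λ₂-σ| · ξ / ‖x_{1,⊥}‖`, and by
`|λ₁-σ|/|λ₂-σ| · ξ` when `x_{1,⊥}` is a unit vector. -/
theorem stmt5 {n : ℕ} (lam : Fin (2 * n) → ℂ)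
    (x y : Fin (2 * n) → EuclideanSpace ℂ (Fin n)) (σ : ℂ)
    (r u : EuclideanSpace ℂ (Fin n)) (V : Submodule ℂ (EuclideanSpace ℂ (Fin n)))
    (i1 i2 : Fin (2 * n)) (hne : i2 ≠ i1)
    (hxnorm : ∀ i, ‖x i‖ = 1)
    (hσ : ∀ i, σ ≠ lam i)
    (hy1 : (inner ℂ (y i1) r : ℂ) ≠ 0)
    (hu : u = ∑ i, ((inner ℂ (y i) r : ℂ) / (σ - lam i)) • x i)
    (hmax : ∀ i, i ≠ i1 → ‖lam i2 - σ‖ ≤ ‖lam i - σ‖)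
    (v x1perp : EuclideanSpace ℂ (Fin n))
    (hv : v = u - (V.orthogonalProjectionOnto u : EuclideanSpace ℂ (Fin n)))
    (hx1perp : x1perp = x i1 - (V.orthogonalProjectionOnto (x i1) : EuclideanSpace ℂ (Fin n)))
    (hv0 : v ≠ 0) (hx1perp0 : x1perp ≠ 0) :
    sinA v x1perp
        ≤ ‖lam i1 - σ‖ / ‖lam i2 - σ‖ *
            ((∑ i ∈ Finset.univ.erase i1, ‖(inner ℂ (y i) r : ℂ)‖) /
              ‖(inner ℂ (y i1) r : ℂ)‖) / ‖x1perp‖ ∧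
      (‖x1perp‖ = 1 →
        sinA v x1perp
          ≤ ‖lam i1 - σ‖ / ‖lam i2 - σ‖ *
              ((∑ i ∈ Finset.univ.erase i1, ‖(inner ℂ (y i) r : ℂ)‖) /
                ‖(inner ℂ (y i1) r : ℂ)‖)) := by
  set c : Fin (2 * n) → ℂ := fun i => (inner ℂ (y i) r : ℂ) / (σ - lam i) with hc
  set z : Fin (2 * n) → EuclideanSpace ℂ (Fin n) :=
    fun i => x i - (V.orthogonalProjectionOnto (x i) : EuclideanSpace ℂ (Fin n)) with hz
  have hσi : ∀ i, σ - lam i ≠ 0 := fun i => sub_ne_zero.2 (hσ i)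
  have hi2 : ‖lam i2 - σ‖ ≠ 0 := norm_ne_zero_iff.2 (sub_ne_zero.2 fun h => hσ i2 h.symm)
  have hc1 : c i1 ≠ 0 := div_ne_zero hy1 (hσi i1)
  have hvz : v = ∑ i, c i • z i := by
    rw [hv, hu, map_sum, AddSubmonoidClass.coe_finset_sum, ← Finset.sum_sub_distrib]
    refine Finset.sum_congr rfl fun i _ => ?_
    rw [map_smul]
    simp only [hc, hz, Submodule.coe_smul, smul_sub]
  set α : ℂ := (c i1)⁻¹ with hα
  have hkey : α • v - x1perp = ∑ i ∈ Finset.univ.erase i1, (α * c i) • z i := by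
    rw [hvz, hx1perp, Finset.smul_sum]
    simp only [smul_smul]
    rw [← Finset.add_sum_erase _ (fun i => (α * c i) • z i) (Finset.mem_univ i1),
      hα, inv_mul_cancel₀ hc1, one_smul,
      show z i1 = x i1 - (V.orthogonalProjectionOnto (x i1) : EuclideanSpace ℂ (Fin n)) from rfl]
    abel
  set K : ℝ := ‖lam i1 - σ‖ / ‖lam i2 - σ‖ *
      ((∑ i ∈ Finset.univ.erase i1, ‖(inner ℂ (y i) r : ℂ)‖) / ‖(inner ℂ (y i1) r : ℂ)‖) with hK
  have hbound : ‖α • v - x1perp‖ ≤ K := by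
    rw [hkey]
    calc ‖∑ i ∈ Finset.univ.erase i1, (α * c i) • z i‖
        ≤ ∑ i ∈ Finset.univ.erase i1, ‖(α * c i) • z i‖ := norm_sum_le _ _
      _ ≤ ∑ i ∈ Finset.univ.erase i1,
            ‖lam i1 - σ‖ / ‖lam i2 - σ‖ * (‖(inner ℂ (y i) r : ℂ)‖ / ‖(inner ℂ (y i1) r : ℂ)‖) := by
          apply Finset.sum_le_sum
          intro i hi
          have hi1 : i ≠ i1 := Finset.ne_of_mem_erase hi
          rw [norm_smul, norm_mul]
          have hzle : ‖z i‖ ≤ 1 := by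
            rw [show z i = x i - (V.orthogonalProjectionOnto (x i) : EuclideanSpace ℂ (Fin n))
              from rfl]
            simpa [hxnorm i] using perp_norm_le V (x i)
          have hαn : ‖α‖ = ‖σ - lam i1‖ / ‖(inner ℂ (y i1) r : ℂ)‖ := by
            rw [hα, show c i1 = (inner ℂ (y i1) r : ℂ) / (σ - lam i1) from rfl, norm_inv,
              norm_div, inv_div]
          have hcn : ‖c i‖ = ‖(inner ℂ (y i) r : ℂ)‖ / ‖σ - lam i‖ := by
            rw [show c i = (inner ℂ (y i) r : ℂ) / (σ - lam i) from rfl, norm_div]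
          calc ‖α‖ * ‖c i‖ * ‖z i‖ ≤ ‖α‖ * ‖c i‖ * 1 := by
                exact mul_le_mul_of_nonneg_left hzle (by positivity)
            _ = ‖σ - lam i1‖ / ‖(inner ℂ (y i1) r : ℂ)‖ *
                  (‖(inner ℂ (y i) r : ℂ)‖ / ‖σ - lam i‖) := by rw [mul_one, hαn, hcn]
            _ ≤ ‖lam i1 - σ‖ / ‖lam i2 - σ‖ *
                  (‖(inner ℂ (y i) r : ℂ)‖ / ‖(inner ℂ (y i1) r : ℂ)‖) := by
                rw [norm_sub_rev σ (lam i1), norm_sub_rev σ (lam i),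
                  div_mul_div_comm, div_mul_div_comm, mul_comm ‖(inner ℂ (y i1) r : ℂ)‖]
                have h2 : (0:ℝ) < ‖lam i2 - σ‖ := (norm_nonneg _).lt_of_ne' hi2
                have hy1n : (0:ℝ) < ‖(inner ℂ (y i1) r : ℂ)‖ := norm_pos_iff.2 hy1
                gcongr
                exact hmax i hi1
      _ = K := by
          rw [hK, ← Finset.mul_sum, ← Finset.sum_div]
  have hxp : (0:ℝ) < ‖x1perp‖ := norm_pos_iff.2 hx1perp0
  have hsin : sinA v x1perp ≤ K / ‖x1perp‖ := by
    calc sinA v x1perp ≤ ‖α • v - x1perp‖ / ‖x1perp‖ := sin_le_aux v x1perp hx1perp0 α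
      _ ≤ K / ‖x1perp‖ := by gcongr
  exact ⟨hsin, fun h1 => by rw [h1, div_one] at hsin; exact hsin⟩
end

section
/- Let V be a subspace of C^n, v and ṽ unit vectors orthogonal to V, x a nonzero vector with x_⊥ = (I - P_V)x ≠ 0. If sin∠(ṽ, x_⊥) < 1, then for the expanded subspace V' = V + span{ṽ} one has sin∠(V', x) < sin∠(V, x), provided sin∠(V, x) > 0. -/
/-- One step of subspace expansion with an (inexact) direction `ṽ` strictly
decreases the angle to the desired eigenvector `x` iff `sin∠(ṽ, x⊥) < 1`. -/
theorem stmt10 {n : ℕ} (V : Submodule ℂ (EuclideanSpace ℂ (Fin n)))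
    (x vt : EuclideanSpace ℂ (Fin n)) (hx : x ≠ 0)
    (hvt : ‖vt‖ = 1) (hvtV : vt ∈ Vᗮ)
    (hperp : x - (Submodule.orthogonalProjection V x : EuclideanSpace ℂ (Fin n)) ≠ 0)
    (hsin : sinA vt (x - (Submodule.orthogonalProjection V x : EuclideanSpace ℂ (Fin n))) < 1)
    (hpos : 0 < sinV V x) :
    sinV (V ⊔ Submodule.span ℂ {vt}) x < sinV V x := by
  set xp : EuclideanSpace ℂ (Fin n) := x - (Submodule.orthogonalProjection V x : EuclideanSpace ℂ (Fin n))
    with hxp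
  set c : ℂ := inner ℂ vt x with hc
  have hxpV : xp ∈ Vᗮ := V.sub_starProjection_mem_orthogonal x
  have hvtPV : (inner ℂ vt (Submodule.orthogonalProjection V x : EuclideanSpace ℂ (Fin n)) : ℂ) = 0 :=
    (Submodule.mem_orthogonal' V vt).1 hvtV _ (Submodule.orthogonalProjection V x).2
  have hcxp : (inner ℂ vt xp : ℂ) = c := by
    rw [hxp, inner_sub_right, hvtPV, hc, sub_zero]
  have hc0 : c ≠ 0 := by
    intro h
    simp only [sinA, hcxp, h, hvt] at hsin
    norm_num at hsin
  set p : EuclideanSpace ℂ (Fin n) := (Submodule.orthogonalProjection V x : EuclideanSpace ℂ (Fin n)) + c • vt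
    with hp
  have hpmem : p ∈ V ⊔ Submodule.span ℂ {vt} :=
    Submodule.add_mem_sup (Submodule.orthogonalProjection V x).2
      (Submodule.smul_mem _ c (Submodule.mem_span_singleton_self vt))
  have hxps : x - p = xp - c • vt := by rw [hp, hxp]; abel
  have hvtvt : (inner ℂ vt vt : ℂ) = 1 := by
    rw [inner_self_eq_norm_sq_to_K, hvt]; norm_num
  have hinnervt : (inner ℂ vt (x - p) : ℂ) = 0 := by
    rw [hxps, inner_sub_right, hcxp, inner_smul_right, hvtvt, mul_one, sub_self]
  have hproj : (Submodule.orthogonalProjection (V ⊔ Submodule.span ℂ {vt}) x :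
      EuclideanSpace ℂ (Fin n)) = p := by
    apply Submodule.eq_starProjection_of_mem_of_inner_eq_zero hpmem
    intro w hw
    obtain ⟨a, ha, b, hb, rfl⟩ := Submodule.mem_sup.1 hw
    obtain ⟨d, rfl⟩ := Submodule.mem_span_singleton.1 hb
    have h1 : (inner ℂ (x - p) a : ℂ) = 0 := by
      have hm : x - p ∈ Vᗮ := by
        rw [hxps]
        exact Submodule.sub_mem _ hxpV (Submodule.smul_mem _ c hvtV)
      exact (Submodule.mem_orthogonal' V _).1 hm a ha
    have h2 : (inner ℂ (x - p) vt : ℂ) = 0 := by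
      rw [← inner_conj_symm, hinnervt, map_zero]
    rw [inner_add_right, h1, inner_smul_right, h2, mul_zero, add_zero]
  have hnormsq : ‖x - p‖ ^ 2 = ‖xp‖ ^ 2 - ‖c‖ ^ 2 := by
    have h1 : (inner ℂ xp (c • vt) : ℂ) = ((‖c‖ ^ 2 : ℝ) : ℂ) := by
      rw [inner_smul_right, ← inner_conj_symm, hcxp, Complex.mul_conj']
      simp [Complex.normSq_eq_norm_sq, sq]
    have h2 := @norm_sub_sq ℂ (EuclideanSpace ℂ (Fin n)) _ _ _ xp (c • vt)
    have h3 : ‖c • vt‖ = ‖c‖ := by rw [norm_smul, hvt, mul_one]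
    rw [hxps, h2, h1, h3]
    simp [← Complex.ofReal_pow, Complex.ofReal_re]
    ring
  have hlt : ‖x - p‖ < ‖xp‖ := by
    have hc2 : 0 < ‖c‖ ^ 2 := pow_pos (norm_pos_iff.2 hc0) 2
    have hsq : ‖x - p‖ ^ 2 < ‖xp‖ ^ 2 := by rw [hnormsq]; linarith
    exact lt_of_pow_lt_pow_left₀ 2 (norm_nonneg _) hsq
  rw [sinV, sinV, hproj, ← hxp]
  gcongr
end

section
/- Let V be a subspace of C^n with projector P_V, u a vector with (I - P_V)u ≠ 0, and ũ a vector with (I - P_V)ũ ≠ 0. Define v = (I-P_V)u/||(I-P_V)u||, ṽ = (I-P_V)ũ/||(I-P_V)ũ||, ε̃ = ||(I-P_V)(ũ - u)||/||(I-P_V)u||, and f_⊥ = (I-P_V)(ũ - u) (assumed nonzero). Then sin∠(ṽ, v) ≤ ε̃ · sin∠(ṽ, f_⊥), i.e., the angular perturbation of the normalized expansion direction is bounded by ε̃ times the sine of the angle between ṽ and the projected error direction. -/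
set_option maxHeartbeats 1000000


/-- The angular perturbation of the normalized expansion direction is bounded by
`ε̃ · sin∠(ṽ, f⊥)`. -/
theorem stmt13 {n : ℕ} (V : Submodule ℂ (EuclideanSpace ℂ (Fin n)))
    (u ut : EuclideanSpace ℂ (Fin n))
    (hu : u - (Submodule.orthogonalProjectionOnto V u : EuclideanSpace ℂ (Fin n)) ≠ 0)
    (hut : ut - (Submodule.orthogonalProjectionOnto V ut : EuclideanSpace ℂ (Fin n)) ≠ 0)
    (v vt fperp : EuclideanSpace ℂ (Fin n)) (εt : ℝ)
    (hv : v = ‖u - (Submodule.orthogonalProjectionOnto V u : EuclideanSpace ℂ (Fin n))‖⁻¹ •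
        (u - (Submodule.orthogonalProjectionOnto V u : EuclideanSpace ℂ (Fin n))))
    (hvt : vt = ‖ut - (Submodule.orthogonalProjectionOnto V ut : EuclideanSpace ℂ (Fin n))‖⁻¹ •
        (ut - (Submodule.orthogonalProjectionOnto V ut : EuclideanSpace ℂ (Fin n))))
    (hfperp : fperp = (ut - u) -
        (Submodule.orthogonalProjectionOnto V (ut - u) : EuclideanSpace ℂ (Fin n)))
    (hfne : fperp ≠ 0)
    (hεt : εt = ‖fperp‖ / ‖u - (Submodule.orthogonalProjectionOnto V u : EuclideanSpace ℂ (Fin n))‖) :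
    sinA vt v ≤ εt * sinA vt fperp := by
  set a := u - (Submodule.orthogonalProjectionOnto V u : EuclideanSpace ℂ (Fin n)) with ha
  set b := ut - (Submodule.orthogonalProjectionOnto V ut : EuclideanSpace ℂ (Fin n)) with hb
  have hA : 0 < ‖a‖ := norm_pos_iff.2 hu
  have hB : 0 < ‖b‖ := norm_pos_iff.2 hut
  have hF : 0 < ‖fperp‖ := norm_pos_iff.2 hfne
  have hf : a = b - fperp := by
    rw [hfperp, ha, hb, map_sub]
    push_cast
    abel
  -- inner products
  have hba : (inner ℂ b a : ℂ) = (‖b‖ : ℂ) ^ 2 - (inner ℂ b fperp : ℂ) := by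
    rw [hf, inner_sub_right, inner_self_eq_norm_sq_to_K]; rfl
  have hA2 : ‖a‖ ^ 2 = ‖b‖ ^ 2 - 2 * (inner ℂ b fperp : ℂ).re + ‖fperp‖ ^ 2 := by
    rw [hf]
    exact_mod_cast @norm_sub_sq ℂ _ _ _ _ b fperp
  have hxnorm : ‖(inner ℂ b a : ℂ)‖ ^ 2 =
      (‖b‖ ^ 2 - (inner ℂ b fperp : ℂ).re) ^ 2 + (inner ℂ b fperp : ℂ).im ^ 2 := by
    rw [hba, ← Complex.ofReal_pow, Complex.sq_norm, Complex.normSq_apply]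
    simp only [Complex.sub_re, Complex.sub_im, Complex.ofReal_re, Complex.ofReal_im]
    ring
  have hz2 : ‖(inner ℂ b fperp : ℂ)‖ ^ 2 =
      (inner ℂ b fperp : ℂ).re ^ 2 + (inner ℂ b fperp : ℂ).im ^ 2 := by
    rw [Complex.sq_norm, Complex.normSq_apply]
    ring
  have key : ‖a‖ ^ 2 * ‖b‖ ^ 2 - ‖(inner ℂ b a : ℂ)‖ ^ 2 =
      ‖b‖ ^ 2 * ‖fperp‖ ^ 2 - ‖(inner ℂ b fperp : ℂ)‖ ^ 2 := by
    rw [hA2, hxnorm, hz2]; ring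
  set K := ‖b‖ ^ 2 * ‖fperp‖ ^ 2 - ‖(inner ℂ b fperp : ℂ)‖ ^ 2 with hKdef
  have hK : 0 ≤ K := by
    have h := norm_inner_le_norm (𝕜 := ℂ) b fperp
    nlinarith [norm_nonneg (inner ℂ b fperp : ℂ), hB.le, hF.le]
  -- norms of normalized vectors
  have hnvt : ‖vt‖ = 1 := by
    rw [hvt, norm_smul, Real.norm_eq_abs, abs_of_nonneg (inv_nonneg.2 hB.le)]
    exact inv_mul_cancel₀ hB.ne'
  have hnv : ‖v‖ = 1 := by
    rw [hv, norm_smul, Real.norm_eq_abs, abs_of_nonneg (inv_nonneg.2 hA.le)]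
    exact inv_mul_cancel₀ hA.ne'
  have hivv : ‖(inner ℂ vt v : ℂ)‖ = ‖b‖⁻¹ * (‖a‖⁻¹ * ‖(inner ℂ b a : ℂ)‖) := by
    rw [hvt, hv, RCLike.real_smul_eq_coe_smul (K := ℂ), RCLike.real_smul_eq_coe_smul (K := ℂ),
      inner_smul_left, inner_smul_right, norm_mul, norm_mul, RCLike.norm_conj]
    simp [RCLike.norm_ofReal, abs_of_nonneg hB.le, abs_of_nonneg hA.le]
  have hivf : ‖(inner ℂ vt fperp : ℂ)‖ = ‖b‖⁻¹ * ‖(inner ℂ b fperp : ℂ)‖ := by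
    rw [hvt, RCLike.real_smul_eq_coe_smul (K := ℂ), inner_smul_left, norm_mul, RCLike.norm_conj]
    simp [RCLike.norm_ofReal, abs_of_nonneg hB.le]
  -- rewrite both sinA values
  have lhs_eq : sinA vt v = Real.sqrt (K / (‖a‖ ^ 2 * ‖b‖ ^ 2)) := by
    rw [sinA, hnvt, hnv, hivv, ← key]
    congr 1
    field_simp
    try ring
  have rhs_eq : sinA vt fperp = Real.sqrt (K / (‖b‖ ^ 2 * ‖fperp‖ ^ 2)) := by
    rw [sinA, hnvt, hivf, hKdef]
    congr 1
    field_simp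
    try ring
  have e1 : Real.sqrt (K / (‖a‖ ^ 2 * ‖b‖ ^ 2)) = Real.sqrt K / (‖a‖ * ‖b‖) := by
    rw [Real.sqrt_div hK, show ‖a‖ ^ 2 * ‖b‖ ^ 2 = (‖a‖ * ‖b‖) ^ 2 by ring,
      Real.sqrt_sq (by positivity)]
  have e2 : Real.sqrt (K / (‖b‖ ^ 2 * ‖fperp‖ ^ 2)) = Real.sqrt K / (‖b‖ * ‖fperp‖) := by
    rw [Real.sqrt_div hK, show ‖b‖ ^ 2 * ‖fperp‖ ^ 2 = (‖b‖ * ‖fperp‖) ^ 2 by ring,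
      Real.sqrt_sq (by positivity)]
  rw [lhs_eq, rhs_eq, e1, e2, hεt]
  rw [div_mul_div_comm]
  apply le_of_eq
  field_simp
end
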